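/- The function t ↦ f(t)/t^{1/(2γ)} is increasing on (0,∞), and |f(t)|/|t|^{1/(2γ)} converges to a positive constant A as |t| → ∞. -/

import Mathlib

open Filter Set

/-- Key algebraic identity: the derivative of `x ↦ x ^ (2γ)` along the ODE. -/
lemma aux_id (p γ x : ℝ) (hp : 1 < p) (hγ : 1/2 < γ) (hx : 0 < x) :
    2*γ * x^(2*γ-1) * (1 + (2*γ)^(p-1) * x^(p*(2*γ-1)))^(-(1/p))
      = (2*γ * ((2*γ)^(p-1) * x^(p*(2*γ-1)) / (1 + (2*γ)^(p-1) * x^(p*(2*γ-1)))))^(1/p) := by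
  have h2γ : (0:ℝ) < 2*γ := by linarith
  have hp0 : (0:ℝ) < p := by linarith
  set u := (2*γ)^(p-1) * x^(p*(2*γ-1)) with hu
  have hup : 0 < u := mul_pos (Real.rpow_pos_of_pos h2γ _) (Real.rpow_pos_of_pos hx _)
  have h1u : (0:ℝ) < 1 + u := by linarith
  have key : (2*γ*u)^(1/p) = 2*γ * x^(2*γ-1) := by
    have h1 : 2*γ*u = (2*γ)^p * x^(p*(2*γ-1)) := by
      rw [hu]
      have : (2*γ)^p = (2*γ)^(1+(p-1)) := by ring_nf
      rw [this, Real.rpow_add h2γ, Real.rpow_one]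
      ring
    rw [h1, Real.mul_rpow (Real.rpow_nonneg h2γ.le _) (Real.rpow_nonneg hx.le _),
      ← Real.rpow_mul h2γ.le, ← Real.rpow_mul hx.le]
    have e1 : p * (1/p) = 1 := by field_simp
    have e2 : p*(2*γ-1) * (1/p) = 2*γ-1 := by field_simp
    rw [e1, e2, Real.rpow_one]
  have h2 : 2*γ * (u/(1+u)) = (2*γ*u)/(1+u) := by ring
  rw [h2, Real.div_rpow (by positivity) h1u.le, key, Real.rpow_neg h1u.le]
  ring

theorem stmt6 (p γ : ℝ) (hp : 1 < p) (hγ : 1/2 < γ)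
    (f f' : ℝ → ℝ)
    (hodd : ∀ t, f (-t) = - f t) (hf0 : f 0 = 0)
    (hderiv : ∀ t, HasDerivAt f (f' t) t)
    (hf' : ∀ t, f' t = (1 + (2*γ)^(p-1) * |f t| ^ (p*(2*γ-1))) ^ (-(1/p))) :
    StrictMonoOn (fun t => f t / t ^ (1/(2*γ))) (Set.Ioi 0) ∧
    ∃ A > 0, Filter.Tendsto (fun t => |f t| / |t| ^ (1/(2*γ)))
      (Filter.cocompact ℝ) (nhds A) := by
  have h2γ : (0:ℝ) < 2*γ := by linarith
  have h2γ1 : (1:ℝ) < 2*γ := by linarith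
  have hp0 : (0:ℝ) < p := by linarith
  have hq : (0:ℝ) < p*(2*γ-1) := by nlinarith
  -- positivity of f'
  have hbase : ∀ t, (0:ℝ) < 1 + (2*γ)^(p-1) * |f t| ^ (p*(2*γ-1)) := by
    intro t
    have h1 : (0:ℝ) < (2*γ)^(p-1) := Real.rpow_pos_of_pos h2γ _
    have h2 : (0:ℝ) ≤ |f t| ^ (p*(2*γ-1)) := Real.rpow_nonneg (abs_nonneg _) _
    nlinarith
  have hf'pos : ∀ t, 0 < f' t := by
    intro t; rw [hf']; exact Real.rpow_pos_of_pos (hbase t) _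
  have hfmono : StrictMono f :=
    strictMono_of_deriv_pos fun x => by rw [(hderiv x).deriv]; exact hf'pos x
  have hfpos : ∀ t, 0 < t → 0 < f t := by
    intro t ht; have := hfmono ht; rwa [hf0] at this
  have hfcont : Continuous f :=
    continuous_iff_continuousAt.2 fun t => (hderiv t).continuousAt
  set q := p*(2*γ-1) with hqdef
  set u : ℝ → ℝ := fun t => (2*γ)^(p-1) * (f t)^q with hudef
  have hupos : ∀ t, 0 < t → 0 < u t := fun t ht =>
    mul_pos (Real.rpow_pos_of_pos h2γ _) (Real.rpow_pos_of_pos (hfpos t ht) _)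
  set D : ℝ → ℝ := fun t => 2*γ * (f t)^(2*γ-1) * f' t with hDdef
  have hH : ∀ t, 0 < t → HasDerivAt (fun s => (f s)^(2*γ)) (D t) t := by
    intro t ht
    have h1 := (Real.hasDerivAt_rpow_const (x := f t) (p := 2*γ)
      (Or.inl (hfpos t ht).ne')).comp t (hderiv t)
    exact h1.congr_deriv (by show _ = 2*γ * (f t)^(2*γ-1) * f' t; ring)
  have hid : ∀ t, 0 < t → D t = (2*γ * (u t/(1+u t)))^(1/p) := by
    intro t ht
    simp only [hDdef, hudef, hqdef]
    rw [hf' t, abs_of_pos (hfpos t ht)]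
    exact aux_id p γ (f t) hp hγ (hfpos t ht)
  have humono : ∀ s t, 0 < s → s < t → u s < u t := by
    intro s t hs hst
    simp only [hudef]
    exact mul_lt_mul_of_pos_left
      (Real.rpow_lt_rpow (hfpos s hs).le (hfmono hst) hq)
      (Real.rpow_pos_of_pos h2γ _)
  have hWlt : ∀ a b : ℝ, 0 < a → a < b → 2*γ*(a/(1+a)) < 2*γ*(b/(1+b)) := by
    intro a b ha hab
    have h1a : (0:ℝ) < 1 + a := by linarith
    have h1b : (0:ℝ) < 1 + b := by linarith
    have : a/(1+a) < b/(1+b) := by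
      rw [div_lt_div_iff₀ h1a h1b]; nlinarith
    exact mul_lt_mul_of_pos_left this h2γ
  have hWnn : ∀ t, 0 < t → 0 ≤ 2*γ*(u t/(1+u t)) := by
    intro t ht
    have := hupos t ht
    have h1u : (0:ℝ) < 1 + u t := by linarith
    positivity
  have hDmono : ∀ s t, 0 < s → s < t → D s < D t := by
    intro s t hs hst
    rw [hid s hs, hid t (hs.trans hst)]
    exact Real.rpow_lt_rpow (hWnn s hs)
      (hWlt _ _ (hupos s hs) (humono s t hs hst)) (by positivity)
  have hDlt : ∀ t, 0 < t → D t < (2*γ)^(1/p) := by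
    intro t ht
    rw [hid t ht]
    apply Real.rpow_lt_rpow (hWnn t ht) _ (by positivity)
    have hu := hupos t ht
    have h1u : (0:ℝ) < 1 + u t := by linarith
    have : u t/(1+u t) < 1 := (div_lt_one h1u).2 (by linarith)
    nlinarith
  have hHcont : Continuous (fun s => (f s)^(2*γ)) :=
    (Real.continuous_rpow_const h2γ.le).comp hfcont
  have hslope : ∀ s t, 0 ≤ s → s < t → ∃ c ∈ Ioo s t,
      D c = ((f t)^(2*γ) - (f s)^(2*γ))/(t - s) := by
    intro s t hs hst
    exact exists_hasDerivAt_eq_slope (fun x => (f x)^(2*γ)) D hst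
      hHcont.continuousOn (fun x hx => hH x (lt_of_le_of_lt hs hx.1))
  have hzero : (f 0)^(2*γ) = (0:ℝ) := by rw [hf0, Real.zero_rpow h2γ.ne']
  have hslope0 : ∀ t, 0 < t → ∃ c ∈ Ioo 0 t, D c = (f t)^(2*γ)/t := by
    intro t ht
    obtain ⟨c, hc, hceq⟩ := hslope 0 t le_rfl ht
    exact ⟨c, hc, by rwa [hzero, sub_zero, sub_zero] at hceq⟩
  have hkey2 : ∀ t, 0 < t → f t < 2*γ * (t * f' t) := by
    intro t ht
    obtain ⟨c, hc, hceq⟩ := hslope0 t ht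
    have h1 : D c < D t := hDmono c t hc.1 hc.2
    rw [hceq] at h1
    have h2 : (f t)^(2*γ) < D t * t := (div_lt_iff₀ ht).1 h1
    have hX : 0 < (f t)^(2*γ-1) := Real.rpow_pos_of_pos (hfpos t ht) _
    have hsplit : (f t)^(2*γ) = f t * (f t)^(2*γ-1) := by
      have h0 : (f t)^((1:ℝ)+(2*γ-1)) = f t * (f t)^(2*γ-1) := by
        rw [Real.rpow_add (hfpos t ht), Real.rpow_one]
      rw [← h0]; ring_nf
    rw [hsplit] at h2
    simp only [hDdef] at h2
    nlinarith [hf'pos t, ht]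
  constructor
  · apply strictMonoOn_of_deriv_pos (convex_Ioi 0)
    · exact ContinuousOn.div hfcont.continuousOn
        (Real.continuous_rpow_const (by positivity)).continuousOn
        (fun x hx => (Real.rpow_pos_of_pos hx _).ne')
    · intro x hx
      rw [interior_Ioi] at hx
      have hx0 : (0:ℝ) < x := hx
      have hxα : HasDerivAt (fun s : ℝ => s ^ (1/(2*γ))) (1/(2*γ) * x^(1/(2*γ)-1)) x :=
        Real.hasDerivAt_rpow_const (Or.inl hx0.ne')
      have hg : HasDerivAt (fun t => f t / t^(1/(2*γ)))
          ((f' x * x^(1/(2*γ)) - f x * (1/(2*γ) * x^(1/(2*γ)-1))) / (x^(1/(2*γ)))^2) x :=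
        (hderiv x).div hxα (Real.rpow_pos_of_pos hx0 _).ne'
      rw [hg.deriv]
      apply div_pos _ (by positivity)
      have hsplit : x^(1/(2*γ)) = x * x^(1/(2*γ)-1) := by
        have h0 : x^((1:ℝ)+(1/(2*γ)-1)) = x * x^(1/(2*γ)-1) := by
          rw [Real.rpow_add hx0, Real.rpow_one]
        rw [← h0]; ring_nf
      rw [hsplit]
      have h1 := hkey2 x hx0
      have hxp : 0 < x^(1/(2*γ)-1) := Real.rpow_pos_of_pos hx0 _
      have h2 : f x / (2*γ) < x * f' x := by
        rw [div_lt_iff₀ h2γ]; nlinarith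
      have hkeyeq : f' x * (x * x^(1/(2*γ)-1)) - f x * (1/(2*γ) * x^(1/(2*γ)-1))
          = x^(1/(2*γ)-1) * (x * f' x - f x/(2*γ)) := by ring
      rw [hkeyeq]
      exact mul_pos hxp (sub_pos.2 h2)
  -- the limit
  · have hLpos : (0:ℝ) < (2*γ)^(1/p) := Real.rpow_pos_of_pos h2γ _
    have hunbdd : ∀ b : ℝ, ∃ a, b ≤ f a := by
      intro b
      by_contra hcon
      push_neg at hcon
      set M := max b 0 with hM
      have hMnn : (0:ℝ) ≤ M := le_max_right _ _
      have hcM : (0:ℝ) < (2*γ)^(p-1) := Real.rpow_pos_of_pos h2γ _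
      have hBpos : (0:ℝ) < 1 + (2*γ)^(p-1) * M^q := by positivity
      set δ := (1 + (2*γ)^(p-1) * M^q)^(-(1/p)) with hδdef
      have hδ : 0 < δ := Real.rpow_pos_of_pos hBpos _
      have hf'ge : ∀ t, 0 < t → δ ≤ f' t := by
        intro t ht
        rw [hf']
        apply Real.rpow_le_rpow_of_nonpos (hbase t) _ (neg_nonpos.2 (by positivity))
        have hab : |f t| ≤ M := by
          rw [abs_of_pos (hfpos t ht)]
          exact le_trans (hcon t).le (le_max_left _ _)
        have := Real.rpow_le_rpow (abs_nonneg (f t)) hab hq.le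
        nlinarith
      set T := (M+1)/δ with hT
      have hT0 : 0 < T := by positivity
      obtain ⟨c, hc, hceq⟩ := exists_hasDerivAt_eq_slope f f' hT0
        hfcont.continuousOn (fun x _ => hderiv x)
      rw [hf0, sub_zero, sub_zero] at hceq
      have h1 : δ ≤ f' c := hf'ge c hc.1
      have h2 : f T < b := hcon T
      have h3 : f T = f' c * T := by rw [hceq]; field_simp
      have h4 : δ * T = M + 1 := by rw [hT]; field_simp
      have h5 : δ * T ≤ f' c * T := mul_le_mul_of_nonneg_right h1 hT0.le
      have h6 : b ≤ M := le_max_left _ _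
      linarith
    have hftop : Tendsto f atTop atTop :=
      tendsto_atTop_atTop_of_monotone hfmono.monotone hunbdd
    have hutop : Tendsto u atTop atTop := by
      have h1 : Tendsto (fun t => (f t)^q) atTop atTop := (tendsto_rpow_atTop hq).comp hftop
      exact h1.const_mul_atTop (Real.rpow_pos_of_pos h2γ _)
    have hWtend : Tendsto (fun t => 2*γ * (u t/(1+u t))) atTop (nhds (2*γ)) := by
      have h1 : Tendsto (fun t => 1 + u t) atTop atTop :=
        tendsto_atTop_add_const_left _ 1 hutop
      have h2 : Tendsto (fun t => (1+u t)⁻¹) atTop (nhds 0) :=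
        tendsto_inv_atTop_zero.comp h1
      have h3 : Tendsto (fun t => 2*γ * (1 - (1+u t)⁻¹)) atTop (nhds (2*γ * (1 - 0))) :=
        (tendsto_const_nhds.sub h2).const_mul _
      rw [sub_zero, mul_one] at h3
      refine Tendsto.congr' ?_ h3
      filter_upwards [eventually_gt_atTop 0] with t ht
      have hu := hupos t ht
      have h1u : (0:ℝ) < 1 + u t := by linarith
      field_simp
      ring
    have hDtend : Tendsto D atTop (nhds ((2*γ)^(1/p))) := by
      have hc : ContinuousAt (fun x : ℝ => x^(1/p)) (2*γ) :=
        Real.continuousAt_rpow_const _ _ (Or.inl h2γ.ne')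
      have h1 := hc.tendsto.comp hWtend
      refine Tendsto.congr' ?_ h1
      filter_upwards [eventually_gt_atTop 0] with t ht
      exact (hid t ht).symm
    have hHtend : Tendsto (fun t => (f t)^(2*γ)/t) atTop (nhds ((2*γ)^(1/p))) := by
      rw [Metric.tendsto_atTop]
      intro ε hε
      obtain ⟨N₀, hN₀⟩ := Metric.tendsto_atTop.1 hDtend (ε/2) (by positivity)
      set s := max N₀ 1 with hsdef
      have hs0 : (0:ℝ) < s := lt_of_lt_of_le one_pos (le_max_right _ _)
      have hDs : (2*γ)^(1/p) - ε/2 < D s := by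
        have := hN₀ s (le_max_left _ _)
        rw [Real.dist_eq, abs_lt] at this
        linarith [this.1]
      have hDsle : D s < (2*γ)^(1/p) := hDlt s hs0
      refine ⟨max (s+1) (2*(2*γ)^(1/p)*s/ε + 1), fun t ht => ?_⟩
      have hts : s < t := lt_of_lt_of_le (by linarith) (le_trans (le_max_left _ _) ht)
      have ht0 : 0 < t := hs0.trans hts
      have htb : 2*(2*γ)^(1/p)*s/ε + 1 ≤ t := le_trans (le_max_right _ _) ht
      -- upper bound
      obtain ⟨c, hc, hceq⟩ := hslope0 t ht0
      have hupper : (f t)^(2*γ)/t < (2*γ)^(1/p) := by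
        rw [← hceq]; exact hDlt c hc.1
      -- lower bound
      obtain ⟨c', hc', hceq'⟩ := hslope s t hs0.le hts
      have hlow1 : D s < D c' := hDmono s c' hs0 hc'.1
      have hfs : (0:ℝ) ≤ (f s)^(2*γ) := Real.rpow_nonneg (hfpos s hs0).le _
      have hts0 : (0:ℝ) < t - s := by linarith
      have hlow2 : D s * (t - s) ≤ (f t)^(2*γ) := by
        have := (lt_div_iff₀ hts0).1 (hceq' ▸ hlow1)
        linarith
      have hlow3 : D s * (t-s)/t ≤ (f t)^(2*γ)/t := by gcongr
      have heq : D s * (t-s)/t = D s - D s * s / t := by field_simp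
      have hsm : D s * s / t < ε/2 := by
        rw [div_lt_iff₀ ht0]
        have hDspos : 0 < D s := by
          have := hid s hs0
          rw [this]
          exact Real.rpow_pos_of_pos (by
            have := hupos s hs0
            have h1u : (0:ℝ) < 1 + u s := by linarith
            have : 0 < u s / (1 + u s) := by positivity
            linarith [mul_pos h2γ this]) _
        have h1 : D s * s ≤ (2*γ)^(1/p) * s := mul_le_mul_of_nonneg_right hDsle.le hs0.le
        have h2 : 2*(2*γ)^(1/p)*s/ε < t := by linarith
        have h3 : 2*(2*γ)^(1/p)*s < ε * t := by
          rw [div_lt_iff₀ hε] at h2; linarith [h2]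
        linarith
      have hlower : (2*γ)^(1/p) - ε < (f t)^(2*γ)/t := by
        have : D s - ε/2 ≤ (f t)^(2*γ)/t := by
          rw [heq] at hlow3; linarith
        linarith
      rw [Real.dist_eq, abs_lt]
      constructor <;> linarith
    have hAeq : ∀ t : ℝ, 0 < t → |f t| / |t|^(1/(2*γ)) = ((f t)^(2*γ)/t)^(1/(2*γ)) := by
      intro t ht
      rw [abs_of_pos (hfpos t ht), abs_of_pos ht,
        Real.div_rpow (Real.rpow_nonneg (hfpos t ht).le _) ht.le,
        ← Real.rpow_mul (hfpos t ht).le]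
      have he : 2*γ*(1/(2*γ)) = 1 := by field_simp
      rw [he, Real.rpow_one]
    refine ⟨((2*γ)^(1/p))^(1/(2*γ)), Real.rpow_pos_of_pos hLpos _, ?_⟩
    have hTop : Tendsto (fun t => |f t| / |t|^(1/(2*γ))) atTop
        (nhds (((2*γ)^(1/p))^(1/(2*γ)))) := by
      have hc : ContinuousAt (fun x : ℝ => x^(1/(2*γ))) ((2*γ)^(1/p)) :=
        Real.continuousAt_rpow_const _ _ (Or.inl hLpos.ne')
      have h1 := hc.tendsto.comp hHtend
      refine Tendsto.congr' ?_ h1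
      filter_upwards [eventually_gt_atTop 0] with t ht
      exact (hAeq t ht).symm
    have hBot : Tendsto (fun t => |f t| / |t|^(1/(2*γ))) atBot
        (nhds (((2*γ)^(1/p))^(1/(2*γ)))) := by
      have h1 : Tendsto (fun t : ℝ => |f (-t)| / |(-t)|^(1/(2*γ))) atBot
          (nhds (((2*γ)^(1/p))^(1/(2*γ)))) := hTop.comp tendsto_neg_atBot_atTop
      refine h1.congr fun t => ?_
      rw [hodd, abs_neg, abs_neg]
    rw [cocompact_eq_atBot_atTop, tendsto_sup]
    exact ⟨hBot, hTop⟩
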